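/- arXiv:2304.05007 — 2 statements merged into one kernel-verified Lean document; each statement's English description precedes it below -/
import Mathlib

section
/- Let Y be a countable type, p > 1 and q ≥ 1, and let μ⁰, μ¹, ν₂, …, ν_n be probability mass functions on Y. Assume: (i) μ⁰(y) ≤ p·μ¹(y) and μ¹(y) ≤ p·μ⁰(y) for all y ∈ Y; (ii) μ⁰(y) ≤ q·ν_i(y) and μ¹(y) ≤ q·ν_i(y) for all y ∈ Y and all i ∈ {2, …, n}; and (iii) β' := D₁(μ⁰‖μ¹) satisfies β' ≤ (p−1)/(p+1). Set α = β'/(p−1) and r = αp/q. Then there exist probability mass functions Q₁⁰, Q₁¹, Q₁, Q₂, …, Q_n on Y such that μ⁰ = pα·Q₁⁰ + α·Q₁¹ + (1−α−pα)·Q₁, μ¹ = α·Q₁⁰ + pα·Q₁¹ + (1−α−pα)·Q₁, and ν_i = r·Q₁⁰ + r·Q₁¹ + (1−2r)·Q_i for every i ∈ {2, …, n}. -/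
open scoped ENNReal
open Finset

noncomputable section

/-- Clamp a real number into an `ℝ≥0∞` probability (identity on `[0,1]`). -/
def prob (x : ℝ) : ℝ≥0∞ := min (ENNReal.ofReal x) 1

lemma prob_le_one (x : ℝ) : prob x ≤ 1 := min_le_right _ _

/-- Hockey-stick divergence `D_γ(P‖Q) = ∑_y max 0 (P y − γ·Q y)`. -/
def hsDiv {Y : Type*} (P Q : PMF Y) (γ : ℝ) : ℝ :=
  ∑' y, max 0 ((P y).toReal - γ * (Q y).toReal)

/-- The shuffle of a list of PMFs: sample independently and return the multiset of results. -/
def shuffle {Y : Type*} : List (PMF Y) → PMF (Multiset Y)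
  | [] => PMF.pure 0
  | μ :: μs => μ.bind fun y => (shuffle μs).map fun s => y ::ₘ s

/-- Binomial law on ℕ with `m` trials and success probability `θ` (a real, clamped). -/
def binomN (θ : ℝ) (m : ℕ) : PMF ℕ :=
  (PMF.binomial (prob θ).toNNReal
    ((ENNReal.toNNReal_mono ENNReal.one_ne_top (prob_le_one θ)).trans_eq ENNReal.toNNReal_one)
    m).map Fin.val

/-- Three-point distribution on `Fin 3` with weights `w1, w2, 1 − w1 − w2` (clamped). -/
def triR (w1 w2 : ℝ) : PMF (Fin 3) :=
  PMF.ofFintype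
    ![prob w1, min (prob w2) (1 - prob w1),
      1 - (prob w1 + min (prob w2) (1 - prob w1))]
    (by
      have h : prob w1 + min (prob w2) (1 - prob w1) ≤ 1 := by
        calc prob w1 + min (prob w2) (1 - prob w1)
            ≤ prob w1 + (1 - prob w1) := by gcongr; exact min_le_right _ _
          _ = 1 := add_tsub_cancel_of_le (prob_le_one w1)
      simp only [Fin.sum_univ_three, Matrix.cons_val_zero, Matrix.cons_val_one,
        Matrix.head_cons, Matrix.cons_val_two, Matrix.tail_cons]
      exact add_tsub_cancel_of_le h)

/-- Law of `(A+Δ₁, C−A+Δ₂)` where `C ~ Binomial(m, θC)`, `A ~ Binomial(C, θA)`, and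
`(Δ₁,Δ₂)` equals `(1,0)` w.p. `w1`, `(0,1)` w.p. `w2`, `(0,0)` otherwise. -/
def lawP (m : ℕ) (θC θA w1 w2 : ℝ) : PMF (ℕ × ℕ) :=
  (binomN θC m).bind fun c =>
    (binomN θA c).bind fun a =>
      (triR w1 w2).map fun d =>
        if d = 0 then (a + 1, c - a) else if d = 1 then (a, c - a + 1) else (a, c - a)

/-- Law of `(A+Δ₂, C−A+Δ₁)` for the same sampling process. -/
def lawQ (m : ℕ) (θC θA w1 w2 : ℝ) : PMF (ℕ × ℕ) :=
  (binomN θC m).bind fun c =>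
    (binomN θA c).bind fun a =>
      (triR w1 w2).map fun d =>
        if d = 0 then (a, c - a + 1) else if d = 1 then (a + 1, c - a) else (a, c - a)

/-- `P^q_{β,p}` with `n` users: `α = β/(p−1)`, `r = pα/q`, `C ~ Binomial(n−1, 2r)`,
`A ~ Binomial(C, 1/2)`. -/
def Pq (n : ℕ) (p β q : ℝ) : PMF (ℕ × ℕ) :=
  lawP (n - 1) (2 * (p * (β / (p - 1)) / q)) (1 / 2) (p * (β / (p - 1))) (β / (p - 1))

/-- `Q^q_{β,p}`. -/
def Qq (n : ℕ) (p β q : ℝ) : PMF (ℕ × ℕ) :=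
  lawQ (n - 1) (2 * (p * (β / (p - 1)) / q)) (1 / 2) (p * (β / (p - 1))) (β / (p - 1))

/-- `CDF_{c,θ}[c₁,c₂] = ∑_{c₁ ≤ i ≤ c₂, 0 ≤ i ≤ c} C(c,i) θ^i (1−θ)^{c−i}`. -/
def binCDF (c : ℕ) (θ : ℝ) (c1 c2 : ℝ) : ℝ :=
  ∑ i ∈ Finset.range (c + 1),
    if c1 ≤ (i : ℝ) ∧ (i : ℝ) ≤ c2 then (c.choose i : ℝ) * θ ^ i * (1 - θ) ^ (c - i) else 0

/-- Expectation of `f` under `Binomial(m, θ)`. -/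
def binExp (m : ℕ) (θ : ℝ) (f : ℕ → ℝ) : ℝ :=
  ∑ c ∈ Finset.range (m + 1), (m.choose c : ℝ) * θ ^ c * (1 - θ) ^ (m - c) * f c

/-- The `(p, β)`-variation property of the first randomizer. -/
def VariationProp {X Y : Type*} (R1 : X → PMF Y) (p β : ℝ) : Prop :=
  ∀ x x' : X, (∀ y, (R1 x y).toReal ≤ p * (R1 x' y).toReal) ∧ hsDiv (R1 x) (R1 x') 1 ≤ β

/-- The `q`-ratio property of the first randomizer w.r.t. the others. -/
def RatioProp {X Y : Type*} {m : ℕ} (R1 : X → PMF Y) (R : Fin m → X → PMF Y) (q : ℝ) : Prop :=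
  ∀ (i : Fin m) (x x' : X) (y : Y), (R1 x y).toReal ≤ q * (R i x' y).toReal


lemma exists_pmf_of_real {Y : Type*} (h : Y → ℝ) (hpos : ∀ y, 0 ≤ h y)
    (hsum : Summable h) (h1 : ∑' y, h y = 1) : ∃ P : PMF Y, ∀ y, (P y).toReal = h y := by
  have key : ∑' y, ENNReal.ofReal (h y) = 1 := by
    rw [← ENNReal.ofReal_tsum_of_nonneg hpos hsum, h1, ENNReal.ofReal_one]
  exact ⟨⟨fun y => ENNReal.ofReal (h y), key ▸ ENNReal.summable.hasSum⟩,
    fun y => ENNReal.toReal_ofReal (hpos y)⟩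

lemma exists_pmf_scaled {Y : Type*} (P0 : PMF Y) (c : ℝ) (h : Y → ℝ)
    (hpos : ∀ y, 0 ≤ h y) (hsum : Summable h) (hc : ∑' y, h y = c) :
    ∃ P : PMF Y, ∀ y, c * (P y).toReal = h y := by
  have hc0 : 0 ≤ c := hc ▸ tsum_nonneg hpos
  rcases hc0.eq_or_lt with h0 | h0
  · refine ⟨P0, fun y => ?_⟩
    have hz : h = 0 := (hasSum_zero_iff_of_nonneg hpos).mp
      (by simpa [hc, ← h0] using hsum.hasSum)
    simp [← h0, congrFun hz y]
  · obtain ⟨P, hP⟩ := exists_pmf_of_real (fun y => h y / c)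
      (fun y => div_nonneg (hpos y) h0.le) (hsum.div_const c)
      (by rw [tsum_div_const, hc, div_self h0.ne'])
    exact ⟨P, fun y => by rw [hP y]; field_simp⟩

theorem stmt2 {Y : Type*} [Countable Y] (n : ℕ) (hn : 1 ≤ n) (p q : ℝ) (hp : 1 < p)
    (hq : 1 ≤ q) (μ0 μ1 : PMF Y) (ν : Fin (n - 1) → PMF Y)
    (hvar0 : ∀ y, (μ0 y).toReal ≤ p * (μ1 y).toReal)
    (hvar1 : ∀ y, (μ1 y).toReal ≤ p * (μ0 y).toReal)
    (hq0 : ∀ i y, (μ0 y).toReal ≤ q * (ν i y).toReal)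
    (hq1 : ∀ i y, (μ1 y).toReal ≤ q * (ν i y).toReal)
    (β' α r : ℝ) (hβ' : β' = hsDiv μ0 μ1 1) (hβle : β' ≤ (p - 1) / (p + 1))
    (hα : α = β' / (p - 1)) (hr : r = α * p / q) :
    ∃ (Q10 Q11 Q1 : PMF Y) (Qi : Fin (n - 1) → PMF Y),
      (∀ y, (μ0 y).toReal =
          p * α * (Q10 y).toReal + α * (Q11 y).toReal + (1 - α - p * α) * (Q1 y).toReal) ∧
      (∀ y, (μ1 y).toReal =
          α * (Q10 y).toReal + p * α * (Q11 y).toReal + (1 - α - p * α) * (Q1 y).toReal) ∧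
      (∀ i y, (ν i y).toReal =
          r * (Q10 y).toReal + r * (Q11 y).toReal + (1 - 2 * r) * (Qi i y).toReal) := by
  classical
  have hp1 : (0:ℝ) < p - 1 := by linarith
  have hq0' : (0:ℝ) < q := by linarith
  set f0 : Y → ℝ := fun y => (μ0 y).toReal with hf0
  set f1 : Y → ℝ := fun y => (μ1 y).toReal with hf1
  have f0nn : ∀ y, 0 ≤ f0 y := fun y => ENNReal.toReal_nonneg
  have f1nn : ∀ y, 0 ≤ f1 y := fun y => ENNReal.toReal_nonneg
  have sum_real : ∀ P : PMF Y, Summable (fun y => (P y).toReal) :=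
    fun P => ENNReal.summable_toReal (by simp [P.tsum_coe])
  have tsum_real : ∀ P : PMF Y, ∑' y, (P y).toReal = 1 := fun P => by
    rw [← ENNReal.tsum_toReal_eq (fun y => P.apply_ne_top y), P.tsum_coe, ENNReal.toReal_one]
  have sum0 : Summable f0 := sum_real μ0
  have sum1 : Summable f1 := sum_real μ1
  have t0 : ∑' y, f0 y = 1 := tsum_real μ0
  have t1 : ∑' y, f1 y = 1 := tsum_real μ1
  set dp : Y → ℝ := fun y => max 0 (f0 y - f1 y) with hdp
  set dm : Y → ℝ := fun y => max 0 (f1 y - f0 y) with hdm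
  have dpnn : ∀ y, 0 ≤ dp y := fun y => le_max_left _ _
  have dmnn : ∀ y, 0 ≤ dm y := fun y => le_max_left _ _
  have hd : ∀ y, dp y - dm y = f0 y - f1 y := by
    intro y
    rcases le_total (f1 y) (f0 y) with h | h
    · simp only [hdp, hdm]
      rw [max_eq_right (by linarith), max_eq_left (by linarith)]
      ring
    · simp only [hdp, hdm]
      rw [max_eq_left (by linarith), max_eq_right (by linarith)]
      ring
  have sumdp : Summable dp :=
    Summable.of_nonneg_of_le dpnn (fun y => max_le (f0nn y) (by linarith [f1nn y])) sum0
  have sumdm : Summable dm :=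
    Summable.of_nonneg_of_le dmnn (fun y => max_le (f1nn y) (by linarith [f0nn y])) sum1
  have hβ : ∑' y, dp y = β' := by
    rw [hβ']; unfold hsDiv; simp only [one_mul]; rfl
  have hβm : ∑' y, dm y = β' := by
    have : dm = fun y => dp y - (f0 y - f1 y) := by
      funext y; linarith [hd y]
    rw [this, Summable.tsum_sub sumdp (sum0.sub sum1), hβ,
      Summable.tsum_sub sum0 sum1, t0, t1]
    ring
  have hβnn : 0 ≤ β' := hβ ▸ tsum_nonneg dpnn
  have hαβ : α * (p - 1) = β' := by rw [hα]; field_simp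
  -- Q10 and Q11
  obtain ⟨Q10, hQ10⟩ := exists_pmf_scaled μ0 β' dp dpnn sumdp hβ
  obtain ⟨Q11, hQ11⟩ := exists_pmf_scaled μ0 β' dm dmnn sumdm hβm
  have e10 : ∀ y, p * α * (Q10 y).toReal = p * dp y / (p - 1) := by
    intro y; rw [← hQ10 y, ← hαβ]; field_simp
  have e10' : ∀ y, α * (Q10 y).toReal = dp y / (p - 1) := by
    intro y; rw [← hQ10 y, ← hαβ]; field_simp
  have e11 : ∀ y, α * (Q11 y).toReal = dm y / (p - 1) := by
    intro y; rw [← hQ11 y, ← hαβ]; field_simp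
  have e11' : ∀ y, p * α * (Q11 y).toReal = p * dm y / (p - 1) := by
    intro y; rw [← hQ11 y, ← hαβ]; field_simp
  have er10 : ∀ y, r * (Q10 y).toReal = p * dp y / ((p - 1) * q) := by
    intro y; rw [hr, hα, ← hQ10 y]; field_simp
  have er11 : ∀ y, r * (Q11 y).toReal = p * dm y / ((p - 1) * q) := by
    intro y; rw [hr, hα, ← hQ11 y]; field_simp
  -- Q1
  set h1R : Y → ℝ := fun y => f0 y - (p * α * (Q10 y).toReal + α * (Q11 y).toReal) with hh1R
  have h1nn : ∀ y, 0 ≤ h1R y := by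
    intro y
    simp only [hh1R, e10 y, e11 y]
    rcases le_total (f1 y) (f0 y) with h | h
    · have h1 : dp y = f0 y - f1 y := max_eq_right (by linarith)
      have h2 : dm y = 0 := max_eq_left (by linarith)
      rw [h1, h2]
      rw [sub_nonneg, ← add_div, div_le_iff₀ hp1]
      nlinarith [hvar0 y]
    · have h1 : dp y = 0 := max_eq_left (by linarith)
      have h2 : dm y = f1 y - f0 y := max_eq_right (by linarith)
      rw [h1, h2]
      rw [sub_nonneg, ← add_div, div_le_iff₀ hp1]
      nlinarith [hvar1 y]
  have h1sum : Summable h1R :=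
    sum0.sub (((sum_real Q10).mul_left _).add ((sum_real Q11).mul_left _))
  have h1t : ∑' y, h1R y = 1 - α - p * α := by
    rw [hh1R, Summable.tsum_sub sum0 (((sum_real Q10).mul_left _).add ((sum_real Q11).mul_left _)),
      t0, Summable.tsum_add ((sum_real Q10).mul_left _) ((sum_real Q11).mul_left _),
      tsum_mul_left, tsum_mul_left, tsum_real Q10, tsum_real Q11]
    ring
  obtain ⟨Q1, hQ1⟩ := exists_pmf_scaled μ0 (1 - α - p * α) h1R h1nn h1sum h1t
  -- Qi
  have hiRdef : ∀ i : Fin (n-1), ∃ P : PMF Y, ∀ y, (1 - 2 * r) * (P y).toReal =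
      (ν i y).toReal - (r * (Q10 y).toReal + r * (Q11 y).toReal) := by
    intro i
    set g : Y → ℝ := fun y => (ν i y).toReal with hg
    have gnn : ∀ y, 0 ≤ g y := fun y => ENNReal.toReal_nonneg
    refine exists_pmf_scaled (ν i) _ _ ?_ ?_ ?_
    · intro y
      simp only [er10 y, er11 y]
      rcases le_total (f1 y) (f0 y) with h | h
      · have h1 : dp y = f0 y - f1 y := max_eq_right (by linarith)
        have h2 : dm y = 0 := max_eq_left (by linarith)
        rw [h1, h2]
        rw [sub_nonneg, ← add_div, div_le_iff₀ (by positivity)]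
        nlinarith [hvar0 y, hq0 i y, gnn y]
      · have h1 : dp y = 0 := max_eq_left (by linarith)
        have h2 : dm y = f1 y - f0 y := max_eq_right (by linarith)
        rw [h1, h2]
        rw [sub_nonneg, ← add_div, div_le_iff₀ (by positivity)]
        nlinarith [hvar1 y, hq1 i y, gnn y]
    · exact (sum_real (ν i)).sub (((sum_real Q10).mul_left _).add ((sum_real Q11).mul_left _))
    · rw [Summable.tsum_sub (sum_real (ν i))
        (((sum_real Q10).mul_left _).add ((sum_real Q11).mul_left _)),
        tsum_real (ν i), Summable.tsum_add ((sum_real Q10).mul_left _) ((sum_real Q11).mul_left _),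
        tsum_mul_left, tsum_mul_left, tsum_real Q10, tsum_real Q11]
      ring
  choose Qi hQi using hiRdef
  refine ⟨Q10, Q11, Q1, Qi, fun y => ?_, fun y => ?_, fun i y => ?_⟩
  · have := hQ1 y
    simp only [hh1R] at this
    linarith
  · have h1 := hQ1 y
    simp only [hh1R] at h1
    have e1 : p * α * (Q10 y).toReal = dp y + α * (Q10 y).toReal := by
      have : (p - 1) * (α * (Q10 y).toReal) = dp y := by rw [← hQ10 y, ← hαβ]; ring
      linarith [this]
    have e2 : p * α * (Q11 y).toReal = dm y + α * (Q11 y).toReal := by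
      have : (p - 1) * (α * (Q11 y).toReal) = dm y := by rw [← hQ11 y, ← hαβ]; ring
      linarith [this]
    linarith [hd y, e1, e2, h1]
  · have := hQi i y
    linarith
  

end
end

section
/- Let n ≥ 1 be an integer, p > 1, β ∈ (0, (p−1)/(p+1)], q ≥ 1, and set α = β/(p−1), r = pα/q, assuming r < 1/2. Then for every ε ∈ ℝ: (1) D_{e^ε}(P^q_{β,p} ‖ Q^q_{β,p}) = E_{c ~ Binomial(n−1, 2r)}[ (p − e^ε)·α·CDF_{c,1/2}[⌈low_{c+1} − 1⌉, c] + (1 − p·e^ε)·α·CDF_{c,1/2}[⌈low_{c+1}⌉, c] + (1 − e^ε)·(1 − α − pα)·CDF_{c,1/2}[⌈low_c⌉, c] ]; and (2) D_{e^ε}(Q^q_{β,p} ‖ P^q_{β,p}) = E_{c ~ Binomial(n−1, 2r)}[ (1 − p·e^ε)·α·CDF_{c,1/2}[0, ⌊high_{c+1} − 1⌋] + (p − e^ε)·α·CDF_{c,1/2}[0, ⌊high_{c+1}⌋] + (1 − e^ε)·(1 − α − pα)·CDF_{c,1/2}[0, ⌊high_c⌋] ]; where low_c = ((e^ε·p −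 1)·α·c + (e^ε − 1)·(1 − α − αp)·(n − c)·r/(1 − 2r)) / (α·(e^ε + 1)·(p − 1)) and high_c = ((e^{−ε}·p − 1)·α·c + (e^{−ε} − 1)·(1 − α − αp)·(n − c)·r/(1 − 2r)) / (α·(e^{−ε} + 1)·(p − 1)). -/
open scoped ENNReal
open Finset

noncomputable section

/-- `low_c` threshold function (symmetric case). -/
def lowf (n : ℕ) (p α r ε : ℝ) (c : ℝ) : ℝ :=
  ((Real.exp ε * p - 1) * α * c +
      (Real.exp ε - 1) * (1 - α - α * p) * ((n : ℝ) - c) * (r / (1 - 2 * r))) /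
    (α * (Real.exp ε + 1) * (p - 1))

/-- `high_c` threshold function (symmetric case). -/
def highf (n : ℕ) (p α r ε : ℝ) (c : ℝ) : ℝ :=
  ((Real.exp (-ε) * p - 1) * α * c +
      (Real.exp (-ε) - 1) * (1 - α - α * p) * ((n : ℝ) - c) * (r / (1 - 2 * r))) /
    (α * (Real.exp (-ε) + 1) * (p - 1))

def Bf (θ : ℝ) (m c : ℕ) : ℝ := (m.choose c : ℝ) * θ ^ c * (1 - θ) ^ (m - c)
lemma Bf_nonneg {θ : ℝ} (h0 : 0 ≤ θ) (h1 : θ ≤ 1) (m c : ℕ) : 0 ≤ Bf θ m c := by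
  unfold Bf
  have : (0:ℝ) ≤ 1 - θ := by linarith
  positivity
lemma Bf_zero {m c : ℕ} (h : m < c) (θ : ℝ) : Bf θ m c = 0 := by
  simp [Bf, Nat.choose_eq_zero_of_lt h]
lemma prob_eq {x : ℝ} (h1 : x ≤ 1) : prob x = ENNReal.ofReal x := by
  unfold prob
  rw [min_eq_left]
  exact ENNReal.ofReal_le_one.2 h1
lemma one_sub_ofReal {x : ℝ} (h0 : 0 ≤ x) : (1 : ℝ≥0∞) - ENNReal.ofReal x = ENNReal.ofReal (1 - x) := by
  rw [← ENNReal.ofReal_one, ← ENNReal.ofReal_sub _ h0]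
lemma binomN_apply {θ : ℝ} (h0 : 0 ≤ θ) (h1 : θ ≤ 1) (m k : ℕ) :
    binomN θ m k = ENNReal.ofReal (Bf θ m k) := by
  unfold binomN
  rw [PMF.map_apply]
  by_cases hk : k < m + 1
  · rw [tsum_eq_single ⟨k, hk⟩ (by
      intro b hb
      rw [if_neg]
      intro hkb
      exact hb (Fin.ext hkb.symm))]
    rw [if_pos rfl, PMF.binomial_apply]
    simp only [Fin.val_last]
    rw [prob_eq h1, ENNReal.coe_toNNReal ENNReal.ofReal_ne_top, one_sub_ofReal h0]
    have h1' : (0:ℝ) ≤ 1 - θ := by linarith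
    rw [← ENNReal.ofReal_pow h0, ← ENNReal.ofReal_pow h1',
      ← ENNReal.ofReal_natCast, ← ENNReal.ofReal_mul (by positivity),
      ← ENNReal.ofReal_mul (by positivity)]
    congr 1
    unfold Bf
    ring
  · have hm : m < k := by omega
    rw [Bf_zero hm, ENNReal.ofReal_zero]
    apply ENNReal.tsum_eq_zero.2
    intro i
    rw [if_neg]
    intro h
    omega

section tri
variable {w1 w2 : ℝ} (h1 : 0 ≤ w1) (h2 : 0 ≤ w2) (h12 : w1 + w2 ≤ 1)
include h1 h2 h12

lemma triR_apply0 : triR w1 w2 0 = ENNReal.ofReal w1 := by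
  show prob w1 = _
  exact prob_eq (by linarith)

lemma triR_apply1 : triR w1 w2 1 = ENNReal.ofReal w2 := by
  show min (prob w2) (1 - prob w1) = _
  rw [prob_eq (by linarith : w2 ≤ 1), prob_eq (by linarith : w1 ≤ 1), one_sub_ofReal h1,
    min_eq_left (ENNReal.ofReal_le_ofReal (by linarith))]

lemma triR_apply2 : triR w1 w2 2 = ENNReal.ofReal (1 - (w1 + w2)) := by
  show 1 - (prob w1 + min (prob w2) (1 - prob w1)) = _
  rw [prob_eq (by linarith : w2 ≤ 1), prob_eq (by linarith : w1 ≤ 1), one_sub_ofReal h1,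
    min_eq_left (ENNReal.ofReal_le_ofReal (by linarith)),
    ← ENNReal.ofReal_add h1 h2, one_sub_ofReal (by linarith)]

end tri

/-- explicit real mass of `lawP` (with `θA = 1/2`). -/
def PmR (m : ℕ) (θC w1 w2 : ℝ) (x y : ℕ) : ℝ :=
  (if 1 ≤ x then Bf θC m (x+y-1) * (w1 * Bf (1/2) (x+y-1) (x-1)) else 0)
  + (if 1 ≤ y then Bf θC m (x+y-1) * (w2 * Bf (1/2) (x+y-1) x) else 0)
  + Bf θC m (x+y) * ((1-(w1+w2)) * Bf (1/2) (x+y) x)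

lemma PmR_nonneg {θC w1 w2 : ℝ} (hC0 : 0 ≤ θC) (hC1 : θC ≤ 1)
    (h1 : 0 ≤ w1) (h2 : 0 ≤ w2) (h12 : w1 + w2 ≤ 1) (m x y : ℕ) :
    0 ≤ PmR m θC w1 w2 x y := by
  unfold PmR
  have b1 := Bf_nonneg hC0 hC1 m (x+y-1)
  have b2 := Bf_nonneg hC0 hC1 m (x+y)
  have c1 := Bf_nonneg (by norm_num : (0:ℝ) ≤ 1/2) (by norm_num) (x+y-1) (x-1)
  have c2 := Bf_nonneg (by norm_num : (0:ℝ) ≤ 1/2) (by norm_num) (x+y-1) x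
  have c3 := Bf_nonneg (by norm_num : (0:ℝ) ≤ 1/2) (by norm_num) (x+y) x
  have h3 : 0 ≤ 1 - (w1+w2) := by linarith
  have : (0:ℝ) ≤ Bf θC m (x+y) * ((1-(w1+w2)) * Bf (1/2) (x+y) x) := by positivity
  split_ifs <;> positivity

lemma lawP_apply (m : ℕ) (θC w1 w2 : ℝ) (hC0 : 0 ≤ θC) (hC1 : θC ≤ 1)
    (h1 : 0 ≤ w1) (h2 : 0 ≤ w2) (h12 : w1 + w2 ≤ 1) (x y : ℕ) :
    lawP m θC (1/2) w1 w2 (x, y) = ENNReal.ofReal (PmR m θC w1 w2 x y) := by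
  have hh0 : (0:ℝ) ≤ 1/2 := by norm_num
  have hh1 : (1:ℝ)/2 ≤ 1 := by norm_num
  have hmap : ∀ c a : ℕ,
      ((triR w1 w2).map (fun d : Fin 3 =>
        if d = 0 then (a + 1, c - a) else if d = 1 then (a, c - a + 1) else (a, c - a))) (x, y)
      = (if (x, y) = (a + 1, c - a) then ENNReal.ofReal w1 else 0)
        + ((if (x, y) = (a, c - a + 1) then ENNReal.ofReal w2 else 0)
        + (if (x, y) = (a, c - a) then ENNReal.ofReal (1 - (w1 + w2)) else 0)) := by
    intro c a
    rw [PMF.map_apply, tsum_fintype, Fin.sum_univ_three]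
    rw [triR_apply0 h1 h2 h12, triR_apply1 h1 h2 h12, triR_apply2 h1 h2 h12]
    rw [if_pos (rfl : (0:Fin 3) = 0), if_neg (by decide : ¬(1:Fin 3) = 0),
      if_pos (rfl : (1:Fin 3) = 1), if_neg (by decide : ¬(2:Fin 3) = 0),
      if_neg (by decide : ¬(2:Fin 3) = 1), add_assoc]
    simp [Prod.ext_iff]
  have hin : ∀ c : ℕ,
      ((binomN (1/2) c).bind fun a => (triR w1 w2).map (fun d : Fin 3 =>
        if d = 0 then (a + 1, c - a) else if d = 1 then (a, c - a + 1) else (a, c - a))) (x, y)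
      = ENNReal.ofReal (Bf (1/2) c (x-1)) * (if (x, y) = (x - 1 + 1, c - (x-1)) then ENNReal.ofReal w1 else 0)
        + (ENNReal.ofReal (Bf (1/2) c x) * (if (x, y) = (x, c - x + 1) then ENNReal.ofReal w2 else 0)
        + ENNReal.ofReal (Bf (1/2) c x) * (if (x, y) = (x, c - x) then ENNReal.ofReal (1 - (w1 + w2)) else 0)) := by
    intro c
    rw [PMF.bind_apply]
    have hpt : ∀ a : ℕ, binomN (1/2) c a *
        ((triR w1 w2).map (fun d : Fin 3 =>
          if d = 0 then (a + 1, c - a) else if d = 1 then (a, c - a + 1) else (a, c - a))) (x, y)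
        = ENNReal.ofReal (Bf (1/2) c a) * (if (x, y) = (a + 1, c - a) then ENNReal.ofReal w1 else 0)
          + (ENNReal.ofReal (Bf (1/2) c a) * (if (x, y) = (a, c - a + 1) then ENNReal.ofReal w2 else 0)
          + ENNReal.ofReal (Bf (1/2) c a) * (if (x, y) = (a, c - a) then ENNReal.ofReal (1 - (w1 + w2)) else 0)) := by
      intro a
      rw [hmap, binomN_apply hh0 hh1]
      ring
    rw [tsum_congr hpt, ENNReal.tsum_add, ENNReal.tsum_add]
    congr 1
    · refine tsum_eq_single (x-1) ?_
      intro a ha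
      have hne : ((x:ℕ), y) ≠ (a + 1, c - a) := by
        rw [Ne, Prod.mk.injEq]
        rintro ⟨hh, -⟩
        omega
      rw [if_neg hne, mul_zero]
    congr 1
    · refine tsum_eq_single x ?_
      intro a ha
      have hne : ((x:ℕ), y) ≠ (a, c - a + 1) := by
        rw [Ne, Prod.mk.injEq]
        rintro ⟨hh, -⟩
        omega
      rw [if_neg hne, mul_zero]
    · refine tsum_eq_single x ?_
      intro a ha
      have hne : ((x:ℕ), y) ≠ (a, c - a) := by
        rw [Ne, Prod.mk.injEq]
        rintro ⟨hh, -⟩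
        omega
      rw [if_neg hne, mul_zero]
  show (lawP m θC (1/2) w1 w2) (x,y) = _
  unfold lawP
  rw [PMF.bind_apply]
  rw [tsum_congr (fun c => by
    rw [hin c, binomN_apply hC0 hC1, mul_add, mul_add, ← mul_assoc, ← mul_assoc, ← mul_assoc] :
    ∀ c : ℕ, _ = ENNReal.ofReal (Bf θC m c) * ENNReal.ofReal (Bf (1/2) c (x-1)) * (if (x, y) = (x - 1 + 1, c - (x-1)) then ENNReal.ofReal w1 else 0)
        + (ENNReal.ofReal (Bf θC m c) * ENNReal.ofReal (Bf (1/2) c x) * (if (x, y) = (x, c - x + 1) then ENNReal.ofReal w2 else 0)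
        + ENNReal.ofReal (Bf θC m c) * ENNReal.ofReal (Bf (1/2) c x) * (if (x, y) = (x, c - x) then ENNReal.ofReal (1 - (w1 + w2)) else 0)))]
  rw [ENNReal.tsum_add, ENNReal.tsum_add]
  have ht1 : (∑' c, ENNReal.ofReal (Bf θC m c) * ENNReal.ofReal (Bf (1/2) c (x-1)) *
      (if (x, y) = (x - 1 + 1, c - (x-1)) then ENNReal.ofReal w1 else 0))
      = if 1 ≤ x then ENNReal.ofReal (Bf θC m (x+y-1) * (w1 * Bf (1/2) (x+y-1) (x-1))) else 0 := by
    rw [tsum_eq_single (x+y-1) (by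
      intro c hc
      by_cases hcond : ((x:ℕ), y) = (x - 1 + 1, c - (x-1))
      · rw [Prod.mk.injEq] at hcond
        by_cases hxc : x - 1 ≤ c
        · omega
        · rw [Bf_zero (by omega : c < x - 1), ENNReal.ofReal_zero, mul_zero, zero_mul]
      · rw [if_neg hcond, mul_zero])]
    by_cases hx : 1 ≤ x
    · rw [if_pos (by rw [Prod.mk.injEq]; omega), if_pos hx,
        ← ENNReal.ofReal_mul (Bf_nonneg hC0 hC1 _ _), ← ENNReal.ofReal_mul (mul_nonneg (Bf_nonneg hC0 hC1 _ _) (Bf_nonneg hh0 hh1 _ _))]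
      congr 1
      ring
    · rw [if_neg hx, if_neg (by intro hcc; rw [Prod.mk.injEq] at hcc; omega), mul_zero]
  have ht2 : (∑' c, ENNReal.ofReal (Bf θC m c) * ENNReal.ofReal (Bf (1/2) c x) *
      (if (x, y) = (x, c - x + 1) then ENNReal.ofReal w2 else 0))
      = if 1 ≤ y then ENNReal.ofReal (Bf θC m (x+y-1) * (w2 * Bf (1/2) (x+y-1) x)) else 0 := by
    rw [tsum_eq_single (x+y-1) (by
      intro c hc
      by_cases hcond : ((x:ℕ), y) = (x, c - x + 1)
      · rw [Prod.mk.injEq] at hcond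
        by_cases hxc : x ≤ c
        · omega
        · rw [Bf_zero (by omega : c < x), ENNReal.ofReal_zero, mul_zero, zero_mul]
      · rw [if_neg hcond, mul_zero])]
    by_cases hy : 1 ≤ y
    · rw [if_pos (by rw [Prod.mk.injEq]; omega), if_pos hy,
        ← ENNReal.ofReal_mul (Bf_nonneg hC0 hC1 _ _), ← ENNReal.ofReal_mul (mul_nonneg (Bf_nonneg hC0 hC1 _ _) (Bf_nonneg hh0 hh1 _ _))]
      congr 1
      ring
    · rw [if_neg hy, if_neg (by intro hcc; rw [Prod.mk.injEq] at hcc; omega), mul_zero]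
  have ht3 : (∑' c, ENNReal.ofReal (Bf θC m c) * ENNReal.ofReal (Bf (1/2) c x) *
      (if (x, y) = (x, c - x) then ENNReal.ofReal (1 - (w1+w2)) else 0))
      = ENNReal.ofReal (Bf θC m (x+y) * ((1-(w1+w2)) * Bf (1/2) (x+y) x)) := by
    rw [tsum_eq_single (x+y) (by
      intro c hc
      by_cases hcond : ((x:ℕ), y) = (x, c - x)
      · rw [Prod.mk.injEq] at hcond
        by_cases hxc : x ≤ c
        · omega
        · rw [Bf_zero (by omega : c < x), ENNReal.ofReal_zero, mul_zero, zero_mul]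
      · rw [if_neg hcond, mul_zero])]
    rw [if_pos (by rw [Prod.mk.injEq]; omega),
      ← ENNReal.ofReal_mul (Bf_nonneg hC0 hC1 _ _),
      ← ENNReal.ofReal_mul (mul_nonneg (Bf_nonneg hC0 hC1 _ _) (Bf_nonneg hh0 hh1 _ _))]
    congr 1
    ring
  rw [ht1, ht2, ht3]
  unfold PmR
  have e1 : (if 1 ≤ x then ENNReal.ofReal (Bf θC m (x+y-1) * (w1 * Bf (1/2) (x+y-1) (x-1))) else 0)
      = ENNReal.ofReal (if 1 ≤ x then Bf θC m (x+y-1) * (w1 * Bf (1/2) (x+y-1) (x-1)) else 0) := by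
    split_ifs <;> simp
  have e2 : (if 1 ≤ y then ENNReal.ofReal (Bf θC m (x+y-1) * (w2 * Bf (1/2) (x+y-1) x)) else 0)
      = ENNReal.ofReal (if 1 ≤ y then Bf θC m (x+y-1) * (w2 * Bf (1/2) (x+y-1) x) else 0) := by
    split_ifs <;> simp
  have hA : (0:ℝ) ≤ if 1 ≤ x then Bf θC m (x+y-1) * (w1 * Bf (1/2) (x+y-1) (x-1)) else 0 := by
    have b1 := Bf_nonneg hC0 hC1 m (x+y-1)
    have c1 := Bf_nonneg hh0 hh1 (x+y-1) (x-1)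
    split_ifs <;> positivity
  have hB : (0:ℝ) ≤ if 1 ≤ y then Bf θC m (x+y-1) * (w2 * Bf (1/2) (x+y-1) x) else 0 := by
    have b1 := Bf_nonneg hC0 hC1 m (x+y-1)
    have c2 := Bf_nonneg hh0 hh1 (x+y-1) x
    split_ifs <;> positivity
  have hC : (0:ℝ) ≤ Bf θC m (x+y) * ((1-(w1+w2)) * Bf (1/2) (x+y) x) := by
    have b2 := Bf_nonneg hC0 hC1 m (x+y)
    have c3 := Bf_nonneg hh0 hh1 (x+y) x
    have h3 : (0:ℝ) ≤ 1 - (w1+w2) := by linarith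
    positivity
  rw [e1, e2, ← ENNReal.ofReal_add hB hC, ← ENNReal.ofReal_add hA (by positivity)]
  congr 1
  ring

-- ------------------- chunk 3: lawQ = lawP with swapped weights -------------------

open Classical in
lemma triR_map_apply {β : Type*} {w1 w2 : ℝ} (h1 : 0 ≤ w1) (h2 : 0 ≤ w2) (h12 : w1 + w2 ≤ 1)
    (f : Fin 3 → β) (z : β) :
    ((triR w1 w2).map f) z
      = (if z = f 0 then ENNReal.ofReal w1 else 0)
        + ((if z = f 1 then ENNReal.ofReal w2 else 0)
        + (if z = f 2 then ENNReal.ofReal (1 - (w1 + w2)) else 0)) := by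
  rw [PMF.map_apply, tsum_fintype, Fin.sum_univ_three,
    triR_apply0 h1 h2 h12, triR_apply1 h1 h2 h12, triR_apply2 h1 h2 h12, add_assoc]

lemma lawQ_eq (m : ℕ) (θC θA w1 w2 : ℝ) (h1 : 0 ≤ w1) (h2 : 0 ≤ w2) (h12 : w1 + w2 ≤ 1) :
    lawQ m θC θA w1 w2 = lawP m θC θA w2 w1 := by
  unfold lawQ lawP
  refine congrArg _ (funext fun c => congrArg _ (funext fun a => ?_))
  ext z
  rw [triR_map_apply h1 h2 h12, triR_map_apply h2 h1 (by linarith)]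
  simp only [show ((0:Fin 3) = 0) ↔ True from by decide,
    show ((1:Fin 3) = 0) ↔ False from by decide, show ((1:Fin 3) = 1) ↔ True from by decide,
    show ((2:Fin 3) = 0) ↔ False from by decide, show ((2:Fin 3) = 1) ↔ False from by decide,
    if_true, if_false]
  rw [add_comm w2 w1]
  ring

-- ------------------- chunk 4: choose identities -------------------

lemma h1R (c x : ℕ) :
    (if 1 ≤ x then ((c.choose (x-1) : ℕ):ℝ) else 0) = ((c+1).choose x : ℝ) * x / ((c:ℝ)+1) := by
  rcases x with _ | x'
  · simp
  · rw [if_pos (by omega)]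
    have h := Nat.add_one_mul_choose_eq c x'
    have hcast : ((c:ℝ)+1) * (c.choose x' : ℝ) = ((c+1).choose (x'+1) : ℝ) * ((x':ℝ)+1) := by
      exact_mod_cast congrArg (Nat.cast : ℕ → ℝ) h
    rw [eq_div_iff (by positivity : ((c:ℝ)+1) ≠ 0)]
    simp only [Nat.succ_sub_one]
    push_cast
    linarith

lemma h2R (c x : ℕ) :
    ((c.choose x : ℕ):ℝ) = ((c+1).choose x : ℝ) * (((c:ℝ)+1) - x) / ((c:ℝ)+1) := by
  rcases x with _ | x'
  · simp
    rw [div_self (by positivity : ((c:ℝ)+1) ≠ 0)]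
  · have hpas : ((c+1).choose (x'+1) : ℝ) = (c.choose x' : ℝ) + (c.choose (x'+1) : ℝ) := by
      exact_mod_cast congrArg (Nat.cast : ℕ → ℝ) (Nat.choose_succ_succ c x')
    have h := Nat.add_one_mul_choose_eq c x'
    have hcast : ((c:ℝ)+1) * (c.choose x' : ℝ) = ((c+1).choose (x'+1) : ℝ) * ((x':ℝ)+1) := by
      exact_mod_cast congrArg (Nat.cast : ℕ → ℝ) h
    rw [eq_div_iff (by positivity : ((c:ℝ)+1) ≠ 0)]
    push_cast
    nlinarith [hpas, hcast]

lemma h3R (c a : ℕ) : Bf (1/2) c a = (c.choose a : ℝ) * (1/2)^c := by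
  by_cases h : a ≤ c
  · unfold Bf
    have h2 : (1:ℝ) - 1/2 = 1/2 := by norm_num
    rw [h2, mul_assoc, ← pow_add, Nat.add_sub_cancel' h]
  · rw [Bf_zero (by omega)]
    simp [Nat.choose_eq_zero_of_lt (by omega : c < a)]

lemma h4R {θ : ℝ} (hθ : 1 - θ ≠ 0) (m c : ℕ) (hc : c ≤ m) :
    Bf θ m (c+1) = Bf θ m c * θ * ((m:ℝ) - c) / ((1-θ) * ((c:ℝ)+1)) := by
  rw [eq_div_iff (mul_ne_zero hθ (by positivity : ((c:ℝ)+1) ≠ 0))]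
  rcases eq_or_lt_of_le hc with hcm | hcm
  · subst hcm
    rw [Bf_zero (by omega)]
    simp
  · have hch : ((m.choose (c+1) : ℝ)) * ((c:ℝ)+1) = (m.choose c : ℝ) * ((m:ℝ) - c) := by
      have h := Nat.choose_succ_right_eq m c
      have hcast : ((m.choose (c+1) : ℝ)) * ((c:ℝ)+1) = (m.choose c : ℝ) * ((m - c : ℕ):ℝ) := by
        exact_mod_cast congrArg (Nat.cast : ℕ → ℝ) h
      rw [hcast, Nat.cast_sub (le_of_lt hcm)]
    have epow : (1-θ)^(m-c) = (1-θ)^(m-(c+1)) * (1-θ) := by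
      rw [← pow_succ]
      congr 1
      omega
    unfold Bf
    rw [epow]
    linear_combination (θ^(c+1) * (1-θ)^(m-(c+1)) * (1-θ)) * hch

-- ------------------- chunk 5: key sign identities -------------------

lemma keyP (n : ℕ) (hn : 1 ≤ n) (p α r ε : ℝ) (hp : 1 < p) (hα : 0 < α) (hr2 : 2*r < 1)
    (c x : ℕ) (hc : c ≤ n - 1) (hx : x ≤ c + 1) :
    PmR (n-1) (2*r) (p*α) α x (c+1-x) - Real.exp ε * PmR (n-1) (2*r) α (p*α) x (c+1-x)
      = Bf (2*r) (n-1) c * (1/2)^c * (((c+1).choose x : ℝ) * (α*(p-1)*(1+Real.exp ε))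
          * ((x:ℝ) - lowf n p α r ε ((c:ℝ)+1)) / ((c:ℝ)+1)) := by
  have hy1 : x + (c+1-x) = c+1 := by omega
  have h2r : (1:ℝ) - 2*r ≠ 0 := by intro h; nlinarith
  unfold PmR
  simp only [hy1, Nat.add_sub_cancel]
  simp only [h3R]
  rw [h4R h2r (n-1) c hc]
  have e1 : ∀ w : ℝ, (if 1 ≤ x then Bf (2*r) (n-1) c * (w * ((c.choose (x-1):ℝ) * (1/2)^c)) else 0)
      = Bf (2*r) (n-1) c * (w * ((((c+1).choose x :ℝ) * x / ((c:ℝ)+1)) * (1/2)^c)) := by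
    intro w
    rw [← h1R]
    split_ifs <;> ring
  have e2 : ∀ w : ℝ, (if 1 ≤ c+1-x then Bf (2*r) (n-1) c * (w * ((c.choose x :ℝ) * (1/2)^c)) else 0)
      = Bf (2*r) (n-1) c * (w * ((((c+1).choose x :ℝ) * (((c:ℝ)+1) - x) / ((c:ℝ)+1)) * (1/2)^c)) := by
    intro w
    by_cases hyy : 1 ≤ c+1-x
    · rw [if_pos hyy, ← h2R]
    · rw [if_neg hyy]
      have hxx : x = c + 1 := by omega
      subst hxx
      rw [← h2R]
      simp [Nat.choose_eq_zero_of_lt (Nat.lt_succ_self c)]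
  simp only [e1, e2]
  unfold lowf
  have hcastn : ((n:ℝ)) = ((n-1:ℕ):ℝ) + 1 := by
    rw [Nat.cast_sub hn]
    ring
  rw [hcastn]
  have hexp : Real.exp ε + 1 ≠ 0 := by positivity
  have hα' : α ≠ 0 := ne_of_gt hα
  have hp1 : p - 1 ≠ 0 := by intro h; nlinarith
  have hc1 : ((c:ℝ)+1) ≠ 0 := by positivity
  field_simp
  ring

lemma keyQ (n : ℕ) (hn : 1 ≤ n) (p α r ε : ℝ) (hp : 1 < p) (hα : 0 < α) (hr2 : 2*r < 1)
    (c x : ℕ) (hc : c ≤ n - 1) (hx : x ≤ c + 1) :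
    PmR (n-1) (2*r) α (p*α) x (c+1-x) - Real.exp ε * PmR (n-1) (2*r) (p*α) α x (c+1-x)
      = Bf (2*r) (n-1) c * (1/2)^c * (((c+1).choose x : ℝ) * (α*(p-1)*(1+Real.exp ε))
          * (highf n p α r ε ((c:ℝ)+1) - (x:ℝ)) / ((c:ℝ)+1)) := by
  have hy1 : x + (c+1-x) = c+1 := by omega
  have h2r : (1:ℝ) - 2*r ≠ 0 := by intro h; nlinarith
  unfold PmR
  simp only [hy1, Nat.add_sub_cancel]
  simp only [h3R]
  rw [h4R h2r (n-1) c hc]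
  have e1 : ∀ w : ℝ, (if 1 ≤ x then Bf (2*r) (n-1) c * (w * ((c.choose (x-1):ℝ) * (1/2)^c)) else 0)
      = Bf (2*r) (n-1) c * (w * ((((c+1).choose x :ℝ) * x / ((c:ℝ)+1)) * (1/2)^c)) := by
    intro w
    rw [← h1R]
    split_ifs <;> ring
  have e2 : ∀ w : ℝ, (if 1 ≤ c+1-x then Bf (2*r) (n-1) c * (w * ((c.choose x :ℝ) * (1/2)^c)) else 0)
      = Bf (2*r) (n-1) c * (w * ((((c+1).choose x :ℝ) * (((c:ℝ)+1) - x) / ((c:ℝ)+1)) * (1/2)^c)) := by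
    intro w
    by_cases hyy : 1 ≤ c+1-x
    · rw [if_pos hyy, ← h2R]
    · rw [if_neg hyy]
      have hxx : x = c + 1 := by omega
      subst hxx
      rw [← h2R]
      simp [Nat.choose_eq_zero_of_lt (Nat.lt_succ_self c)]
  simp only [e1, e2]
  unfold highf
  rw [Real.exp_neg]
  have hcastn : ((n:ℝ)) = ((n-1:ℕ):ℝ) + 1 := by
    rw [Nat.cast_sub hn]
    ring
  rw [hcastn]
  have hE0 : Real.exp ε ≠ 0 := ne_of_gt (Real.exp_pos ε)
  have hexp : (Real.exp ε)⁻¹ + 1 ≠ 0 := by positivity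
  have hα' : α ≠ 0 := ne_of_gt hα
  have hp1 : p - 1 ≠ 0 := by intro h; nlinarith
  have hc1 : ((c:ℝ)+1) ≠ 0 := by positivity
  field_simp
  ring

-- ------------------- chunk 6: summation infrastructure -------------------

lemma PmR_vanish {m x y : ℕ} (h : m + 2 ≤ x + y) (θC w1 w2 : ℝ) :
    PmR m θC w1 w2 x y = 0 := by
  unfold PmR
  rw [Bf_zero (by omega : m < x + y - 1), Bf_zero (by omega : m < x + y)]
  simp

lemma sum_prod_diag (N : ℕ) (G : ℕ → ℕ → ℝ) (hG : ∀ x y, N < x + y → G x y = 0) :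
    ∑ z ∈ Finset.range (N+1) ×ˢ Finset.range (N+1), G z.1 z.2
      = ∑ s ∈ Finset.range (N+1), ∑ x ∈ Finset.range (s+1), G x (s-x) := by
  rw [Finset.sum_sigma']
  rw [← Finset.sum_subset
    (Finset.filter_subset (fun z : ℕ × ℕ => z.1 + z.2 ≤ N) (Finset.range (N+1) ×ˢ Finset.range (N+1)))
    (by
      intro z hz hz'
      refine hG z.1 z.2 ?_
      rw [Finset.mem_filter] at hz'
      push_neg at hz'
      exact hz' hz)]
  refine Finset.sum_nbij' (fun z => ⟨z.1 + z.2, z.1⟩)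
    (fun q => (q.2, q.1 - q.2)) ?_ ?_ ?_ ?_ ?_
  · rintro ⟨x, y⟩ ha
    simp only [Finset.mem_filter, Finset.mem_product, Finset.mem_range] at ha
    simp only [Finset.mem_sigma, Finset.mem_range]
    omega
  · rintro ⟨s, x⟩ ha
    simp only [Finset.mem_sigma, Finset.mem_range] at ha
    simp only [Finset.mem_filter, Finset.mem_product, Finset.mem_range]
    omega
  · rintro ⟨x, y⟩ ha
    simp only [Finset.mem_filter, Finset.mem_product, Finset.mem_range] at ha
    have hxy : x + y - x = y := by omega
    simp [hxy]
  · rintro ⟨s, x⟩ ha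
    simp only [Finset.mem_sigma, Finset.mem_range] at ha
    have hxs : x + (s - x) = s := by omega
    simp [hxs]
  · rintro ⟨x, y⟩ ha
    have hxy : x + y - x = y := by omega
    simp [hxy]

lemma hsDiv_eq_sum (m : ℕ) (θC w1 w2 w1' w2' γ : ℝ)
    (hC0 : 0 ≤ θC) (hC1 : θC ≤ 1)
    (h1 : 0 ≤ w1) (h2 : 0 ≤ w2) (h12 : w1 + w2 ≤ 1)
    (h1' : 0 ≤ w1') (h2' : 0 ≤ w2') (h12' : w1' + w2' ≤ 1) :
    hsDiv (lawP m θC (1/2) w1 w2) (lawP m θC (1/2) w1' w2') γ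
      = ∑ s ∈ Finset.range (m+2), ∑ x ∈ Finset.range (s+1),
          max 0 (PmR m θC w1 w2 x (s-x) - γ * PmR m θC w1' w2' x (s-x)) := by
  unfold hsDiv
  have hpt : ∀ z : ℕ × ℕ,
      max 0 (((lawP m θC (1/2) w1 w2) z).toReal - γ * ((lawP m θC (1/2) w1' w2') z).toReal)
        = max 0 (PmR m θC w1 w2 z.1 z.2 - γ * PmR m θC w1' w2' z.1 z.2) := by
    intro z
    have hz : z = (z.1, z.2) := rfl
    rw [hz, lawP_apply m θC w1 w2 hC0 hC1 h1 h2 h12 z.1 z.2,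
      lawP_apply m θC w1' w2' hC0 hC1 h1' h2' h12' z.1 z.2,
      ENNReal.toReal_ofReal (PmR_nonneg hC0 hC1 h1 h2 h12 m z.1 z.2),
      ENNReal.toReal_ofReal (PmR_nonneg hC0 hC1 h1' h2' h12' m z.1 z.2)]
  rw [tsum_congr hpt]
  rw [tsum_eq_sum (s := Finset.range (m+2) ×ˢ Finset.range (m+2)) (by
    intro z hz
    rw [Finset.mem_product, Finset.mem_range, Finset.mem_range] at hz
    have hsum : m + 2 ≤ z.1 + z.2 := by omega
    rw [PmR_vanish hsum, PmR_vanish hsum]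
    simp)]
  exact sum_prod_diag (m+1)
    (fun x y => max 0 (PmR m θC w1 w2 x y - γ * PmR m θC w1' w2' x y)) (by
    intro x y hxy
    rw [PmR_vanish (by omega), PmR_vanish (by omega)]
    simp)

lemma decompP (m : ℕ) (θ w1 w2 E : ℝ) (s x : ℕ) (hx : x ≤ s) :
    PmR m θ w1 w2 x (s-x) - E * PmR m θ w2 w1 x (s-x)
      = (if 1 ≤ x then Bf θ m (s-1) * ((w1 - E*w2) * Bf (1/2) (s-1) (x-1)) else 0)
        + ((if 1 ≤ s - x then Bf θ m (s-1) * ((w2 - E*w1) * Bf (1/2) (s-1) x) else 0)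
        + Bf θ m s * ((1-(w1+w2)) * (1-E) * Bf (1/2) s x)) := by
  unfold PmR
  have hxy : x + (s-x) = s := by omega
  simp only [hxy]
  split_ifs <;> ring

lemma ceil_le_natcast (z : ℝ) (i : ℕ) : ((⌈z⌉ : ℤ):ℝ) ≤ (i:ℝ) ↔ z ≤ (i:ℝ) := by
  rw [show ((i:ℕ):ℝ) = (((i:ℕ):ℤ):ℝ) from by push_cast; ring, Int.cast_le, Int.ceil_le]

lemma natcast_le_floor (z : ℝ) (i : ℕ) : (i:ℝ) ≤ ((⌊z⌋ : ℤ):ℝ) ↔ (i:ℝ) ≤ z := by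
  rw [show ((i:ℕ):ℝ) = (((i:ℕ):ℤ):ℝ) from by push_cast; ring, Int.cast_le, Int.le_floor]

lemma sumA (m : ℕ) (u : ℕ → ℕ → ℝ) (t : ℕ → ℕ → Prop) [∀ s x, Decidable (t s x)] :
    ∑ s ∈ Finset.range (m+2), ∑ x ∈ Finset.range (s+1),
        (if t s x then (if 1 ≤ x then u (s-1) (x-1) else 0) else 0)
      = ∑ c ∈ Finset.range (m+1), ∑ a ∈ Finset.range (c+1),
          (if t (c+1) (a+1) then u c a else 0) := by
  rw [Finset.sum_range_succ']
  have h0 : ∑ x ∈ Finset.range (0+1),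
      (if t 0 x then (if 1 ≤ x then u (0-1) (x-1) else 0) else 0) = 0 := by simp
  rw [h0, add_zero]
  refine Finset.sum_congr rfl fun c hc => ?_
  rw [Finset.sum_range_succ']
  have h0' : (if t (c+1) 0 then (if 1 ≤ (0:ℕ) then u (c+1-1) (0-1) else 0) else 0) = 0 := by simp
  rw [h0', add_zero]
  refine Finset.sum_congr rfl fun a ha => ?_
  rw [if_pos (by omega : 1 ≤ a + 1)]
  simp only [Nat.add_sub_cancel]

lemma sumB (m : ℕ) (u : ℕ → ℕ → ℝ) (t : ℕ → ℕ → Prop) [∀ s x, Decidable (t s x)] :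
    ∑ s ∈ Finset.range (m+2), ∑ x ∈ Finset.range (s+1),
        (if t s x then (if 1 ≤ s - x then u (s-1) x else 0) else 0)
      = ∑ c ∈ Finset.range (m+1), ∑ a ∈ Finset.range (c+1),
          (if t (c+1) a then u c a else 0) := by
  rw [Finset.sum_range_succ']
  have h0 : ∑ x ∈ Finset.range (0+1),
      (if t 0 x then (if 1 ≤ 0 - x then u (0-1) x else 0) else 0) = 0 := by simp
  rw [h0, add_zero]
  refine Finset.sum_congr rfl fun c hc => ?_
  rw [Finset.sum_range_succ]
  have hlast : (if t (c+1) (c+1) then (if 1 ≤ (c+1) - (c+1) then u (c+1-1) (c+1) else 0) else 0) = 0 := by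
    simp
  rw [hlast, add_zero]
  refine Finset.sum_congr rfl fun a ha => ?_
  rw [Finset.mem_range] at ha
  rw [if_pos (by omega : 1 ≤ (c+1) - a)]
  simp only [Nat.add_sub_cancel]

lemma sumC (m : ℕ) (v : ℕ → ℕ → ℝ) (t : ℕ → ℕ → Prop) [∀ s x, Decidable (t s x)]
    (hv : ∀ x, v (m+1) x = 0) :
    ∑ s ∈ Finset.range (m+2), ∑ x ∈ Finset.range (s+1), (if t s x then v s x else 0)
      = ∑ c ∈ Finset.range (m+1), ∑ a ∈ Finset.range (c+1), (if t c a then v c a else 0) := by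
  rw [Finset.sum_range_succ]
  have : ∑ x ∈ Finset.range (m+1+1), (if t (m+1) x then v (m+1) x else 0) = 0 := by
    refine Finset.sum_eq_zero fun x hx => ?_
    rw [hv]
    simp
  rw [this, add_zero]

-- ------------------- chunk 7: pointwise max lemmas -------------------

section maxlem

variable (n : ℕ) (p α r ε : ℝ)

lemma maxP (hn : 1 ≤ n) (hp : 1 < p) (hα : 0 < α) (hr0 : 0 < r)
    (hr2 : 2*r < 1) (ht0 : p*α + α ≤ 1) (s x : ℕ) (hs : s ≤ n) (hx : x ≤ s) :
    max 0 (PmR (n-1) (2*r) (p*α) α x (s-x) - Real.exp ε * PmR (n-1) (2*r) α (p*α) x (s-x))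
      = if lowf n p α r ε (s:ℝ) ≤ (x:ℝ)
          then PmR (n-1) (2*r) (p*α) α x (s-x) - Real.exp ε * PmR (n-1) (2*r) α (p*α) x (s-x)
          else 0 := by
  have hE : 0 < Real.exp ε := Real.exp_pos ε
  have h2r : (0:ℝ) < 1 - 2*r := by linarith
  rcases s with _ | c
  · have hx0 : x = 0 := by omega
    subst hx0
    have hPm : ∀ w1 w2 : ℝ, PmR (n-1) (2*r) w1 w2 0 (0-0) = (1-2*r)^(n-1) * (1-(w1+w2)) := by
      intro w1 w2
      unfold PmR
      norm_num [Bf]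
    rw [hPm, hPm]
    have hΔ : (1-2*r)^(n-1) * (1-(p*α+α)) - Real.exp ε * ((1-2*r)^(n-1) * (1-(α+p*α)))
        = ((1-2*r)^(n-1) * (1-(p*α+α))) * (1-Real.exp ε) := by ring
    rw [hΔ]
    have hA : (0:ℝ) ≤ (1-2*r)^(n-1) := by positivity
    have ht0' : (0:ℝ) ≤ 1-(p*α+α) := by linarith
    have hd : (0:ℝ) < α*(Real.exp ε+1)*(p-1) :=
      mul_pos (mul_pos hα (by linarith)) (by linarith)
    have hnpos : (0:ℝ) < (n:ℝ) := by exact_mod_cast hn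
    have hrr : (0:ℝ) < r/(1-2*r) := div_pos hr0 h2r
    have hlow0 : lowf n p α r ε ((0:ℕ):ℝ)
        = (Real.exp ε - 1)*(1-α-α*p)*((n:ℝ))*(r/(1-2*r)) / (α*(Real.exp ε+1)*(p-1)) := by
      unfold lowf
      norm_num
    by_cases hE1 : Real.exp ε ≤ 1
    · have hL : lowf n p α r ε ((0:ℕ):ℝ) ≤ ((0:ℕ):ℝ) := by
        rw [hlow0]
        push_cast
        apply div_nonpos_of_nonpos_of_nonneg _ hd.le
        have h1 : (0:ℝ) ≤ 1-α-α*p := by nlinarith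
        have := mul_nonneg (mul_nonneg (mul_nonneg
          (by linarith : (0:ℝ) ≤ 1 - Real.exp ε) h1) hnpos.le) hrr.le
        nlinarith
      rw [if_pos hL]
      exact max_eq_right (mul_nonneg (mul_nonneg hA ht0') (by linarith))
    · push_neg at hE1
      rcases eq_or_lt_of_le ht0' with heq | hpos
      · have hz : ((1-2*r)^(n-1) * (1-(p*α+α))) * (1-Real.exp ε) = 0 := by
          rw [← heq]
          ring
        rw [hz]
        split_ifs <;> simp
      · have hL : ((0:ℕ):ℝ) < lowf n p α r ε ((0:ℕ):ℝ) := by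
          rw [hlow0]
          push_cast
          apply div_pos _ hd
          have h1 : (0:ℝ) < 1-α-α*p := by nlinarith
          have := mul_pos (mul_pos (mul_pos
            (by linarith : (0:ℝ) < Real.exp ε - 1) h1) hnpos) hrr
          nlinarith
        rw [if_neg (not_le.2 hL)]
        exact max_eq_left
          (mul_nonpos_of_nonneg_of_nonpos (mul_nonneg hA ht0') (by linarith))
  · have hc : c ≤ n - 1 := by omega
    rw [keyP n hn p α r ε hp hα hr2 c x hc (by omega)]
    have hcast : ((c+1:ℕ):ℝ) = (c:ℝ)+1 := by push_cast; ring
    rw [hcast]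
    have hB : (0:ℝ) ≤ Bf (2*r) (n-1) c := Bf_nonneg (by linarith) (by linarith) _ _
    have hH : (0:ℝ) ≤ (1/2:ℝ)^c := by positivity
    have hCH : (0:ℝ) ≤ ((c+1).choose x : ℝ) := by positivity
    have hK : (0:ℝ) ≤ α*(p-1)*(1+Real.exp ε) :=
      mul_nonneg (mul_nonneg hα.le (by linarith)) (by linarith)
    have hC1 : (0:ℝ) < (c:ℝ)+1 := by positivity
    by_cases hL : lowf n p α r ε ((c:ℝ)+1) ≤ (x:ℝ)
    · rw [if_pos hL]
      refine max_eq_right ?_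
      have hsub : (0:ℝ) ≤ (x:ℝ) - lowf n p α r ε ((c:ℝ)+1) := by linarith
      exact mul_nonneg (mul_nonneg hB hH)
        (div_nonneg (mul_nonneg (mul_nonneg hCH hK) hsub) hC1.le)
    · rw [if_neg hL]
      push_neg at hL
      refine max_eq_left ?_
      have hsub : (x:ℝ) - lowf n p α r ε ((c:ℝ)+1) ≤ 0 := by linarith
      refine mul_nonpos_of_nonneg_of_nonpos (mul_nonneg hB hH) ?_
      exact div_nonpos_of_nonpos_of_nonneg
        (mul_nonpos_of_nonneg_of_nonpos (mul_nonneg hCH hK) hsub) hC1.le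

lemma maxQ (hn : 1 ≤ n) (hp : 1 < p) (hα : 0 < α) (hr0 : 0 < r)
    (hr2 : 2*r < 1) (ht0 : p*α + α ≤ 1) (s x : ℕ) (hs : s ≤ n) (hx : x ≤ s) :
    max 0 (PmR (n-1) (2*r) α (p*α) x (s-x) - Real.exp ε * PmR (n-1) (2*r) (p*α) α x (s-x))
      = if (x:ℝ) ≤ highf n p α r ε (s:ℝ)
          then PmR (n-1) (2*r) α (p*α) x (s-x) - Real.exp ε * PmR (n-1) (2*r) (p*α) α x (s-x)
          else 0 := by
  have hE : 0 < Real.exp ε := Real.exp_pos ε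
  have hE' : 0 < Real.exp (-ε) := Real.exp_pos _
  have h2r : (0:ℝ) < 1 - 2*r := by linarith
  rcases s with _ | c
  · have hx0 : x = 0 := by omega
    subst hx0
    have hPm : ∀ w1 w2 : ℝ, PmR (n-1) (2*r) w1 w2 0 (0-0) = (1-2*r)^(n-1) * (1-(w1+w2)) := by
      intro w1 w2
      unfold PmR
      norm_num [Bf]
    rw [hPm, hPm]
    have hΔ : (1-2*r)^(n-1) * (1-(α+p*α)) - Real.exp ε * ((1-2*r)^(n-1) * (1-(p*α+α)))
        = ((1-2*r)^(n-1) * (1-(p*α+α))) * (1-Real.exp ε) := by ring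
    rw [hΔ]
    have hA : (0:ℝ) ≤ (1-2*r)^(n-1) := by positivity
    have ht0' : (0:ℝ) ≤ 1-(p*α+α) := by linarith
    have hd : (0:ℝ) < α*(Real.exp (-ε)+1)*(p-1) :=
      mul_pos (mul_pos hα (by linarith)) (by linarith)
    have hnpos : (0:ℝ) < (n:ℝ) := by exact_mod_cast hn
    have hrr : (0:ℝ) < r/(1-2*r) := div_pos hr0 h2r
    have hhigh0 : highf n p α r ε ((0:ℕ):ℝ)
        = (Real.exp (-ε) - 1)*(1-α-α*p)*((n:ℝ))*(r/(1-2*r)) / (α*(Real.exp (-ε)+1)*(p-1)) := by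
      unfold highf
      norm_num
    by_cases hE1 : Real.exp ε ≤ 1
    · have hε : ε ≤ 0 := Real.exp_le_one_iff.1 hE1
      have hE1' : 1 ≤ Real.exp (-ε) := Real.one_le_exp_iff.2 (by linarith)
      have hL : ((0:ℕ):ℝ) ≤ highf n p α r ε ((0:ℕ):ℝ) := by
        rw [hhigh0]
        push_cast
        apply div_nonneg _ hd.le
        have h1 : (0:ℝ) ≤ 1-α-α*p := by nlinarith
        have := mul_nonneg (mul_nonneg (mul_nonneg
          (by linarith : (0:ℝ) ≤ Real.exp (-ε) - 1) h1) hnpos.le) hrr.le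
        nlinarith
      rw [if_pos hL]
      exact max_eq_right (mul_nonneg (mul_nonneg hA ht0') (by linarith))
    · push_neg at hE1
      rcases eq_or_lt_of_le ht0' with heq | hpos
      · have hz : ((1-2*r)^(n-1) * (1-(p*α+α))) * (1-Real.exp ε) = 0 := by
          rw [← heq]
          ring
        rw [hz]
        split_ifs <;> simp
      · have hε : 0 < ε := by
          by_contra hcon
          push_neg at hcon
          exact absurd (Real.exp_le_one_iff.2 hcon) (not_le.2 hE1)
        have hE1' : Real.exp (-ε) < 1 := by
          rw [Real.exp_lt_one_iff]
          linarith
        have hL : highf n p α r ε ((0:ℕ):ℝ) < ((0:ℕ):ℝ) := by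
          rw [hhigh0]
          push_cast
          apply div_neg_of_neg_of_pos _ hd
          have h1 : (0:ℝ) < 1-α-α*p := by nlinarith
          have := mul_pos (mul_pos (mul_pos
            (by linarith : (0:ℝ) < 1 - Real.exp (-ε)) h1) hnpos) hrr
          nlinarith
        rw [if_neg (not_le.2 hL)]
        refine max_eq_left ?_
        exact mul_nonpos_of_nonneg_of_nonpos (mul_nonneg hA ht0') (by linarith)
  · have hc : c ≤ n - 1 := by omega
    rw [keyQ n hn p α r ε hp hα hr2 c x hc (by omega)]
    have hcast : ((c+1:ℕ):ℝ) = (c:ℝ)+1 := by push_cast; ring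
    rw [hcast]
    have hB : (0:ℝ) ≤ Bf (2*r) (n-1) c := Bf_nonneg (by linarith) (by linarith) _ _
    have hH : (0:ℝ) ≤ (1/2:ℝ)^c := by positivity
    have hCH : (0:ℝ) ≤ ((c+1).choose x : ℝ) := by positivity
    have hK : (0:ℝ) ≤ α*(p-1)*(1+Real.exp ε) :=
      mul_nonneg (mul_nonneg hα.le (by linarith)) (by linarith)
    have hC1 : (0:ℝ) < (c:ℝ)+1 := by positivity
    by_cases hL : (x:ℝ) ≤ highf n p α r ε ((c:ℝ)+1)
    · rw [if_pos hL]
      refine max_eq_right ?_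
      have hsub : (0:ℝ) ≤ highf n p α r ε ((c:ℝ)+1) - (x:ℝ) := by linarith
      exact mul_nonneg (mul_nonneg hB hH)
        (div_nonneg (mul_nonneg (mul_nonneg hCH hK) hsub) hC1.le)
    · rw [if_neg hL]
      push_neg at hL
      refine max_eq_left ?_
      have hsub : highf n p α r ε ((c:ℝ)+1) - (x:ℝ) ≤ 0 := by linarith
      refine mul_nonpos_of_nonneg_of_nonpos (mul_nonneg hB hH) ?_
      exact div_nonpos_of_nonpos_of_nonneg
        (mul_nonpos_of_nonneg_of_nonpos (mul_nonneg hCH hK) hsub) hC1.le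

end maxlem

-- ------------------- chunk 8: CDF matching -------------------

lemma matchCDFc1 (c : ℕ) (B K z : ℝ) :
    B * (K * binCDF c (1/2) ((⌈z - 1⌉:ℤ):ℝ) (c:ℝ))
      = ∑ a ∈ Finset.range (c+1), (if z ≤ (a:ℝ)+1 then B * (K * Bf (1/2) c a) else 0) := by
  unfold binCDF
  rw [Finset.mul_sum, Finset.mul_sum]
  refine Finset.sum_congr rfl fun i hi => ?_
  rw [Finset.mem_range] at hi
  have hic : (i:ℝ) ≤ (c:ℝ) := by exact_mod_cast (by omega : i ≤ c)
  have hiff : (((⌈z - 1⌉:ℤ):ℝ) ≤ (i:ℝ) ∧ (i:ℝ) ≤ (c:ℝ)) ↔ (z ≤ (i:ℝ)+1) := by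
    rw [ceil_le_natcast (z-1) i]
    constructor
    · rintro ⟨h, -⟩
      linarith
    · intro h
      exact ⟨by linarith, hic⟩
  simp only [hiff]
  split_ifs with h
  · unfold Bf
    ring
  · ring

lemma matchCDFc2 (c : ℕ) (B K z : ℝ) :
    B * (K * binCDF c (1/2) ((⌈z⌉:ℤ):ℝ) (c:ℝ))
      = ∑ a ∈ Finset.range (c+1), (if z ≤ (a:ℝ) then B * (K * Bf (1/2) c a) else 0) := by
  unfold binCDF
  rw [Finset.mul_sum, Finset.mul_sum]
  refine Finset.sum_congr rfl fun i hi => ?_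
  rw [Finset.mem_range] at hi
  have hic : (i:ℝ) ≤ (c:ℝ) := by exact_mod_cast (by omega : i ≤ c)
  have hiff : (((⌈z⌉:ℤ):ℝ) ≤ (i:ℝ) ∧ (i:ℝ) ≤ (c:ℝ)) ↔ (z ≤ (i:ℝ)) := by
    rw [ceil_le_natcast z i]
    constructor
    · rintro ⟨h, -⟩
      exact h
    · intro h
      exact ⟨h, hic⟩
  simp only [hiff]
  split_ifs with h
  · unfold Bf
    ring
  · ring

lemma matchCDFf1 (c : ℕ) (B K z : ℝ) :
    B * (K * binCDF c (1/2) 0 ((⌊z - 1⌋:ℤ):ℝ))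
      = ∑ a ∈ Finset.range (c+1), (if (a:ℝ)+1 ≤ z then B * (K * Bf (1/2) c a) else 0) := by
  unfold binCDF
  rw [Finset.mul_sum, Finset.mul_sum]
  refine Finset.sum_congr rfl fun i hi => ?_
  have hiff : ((0:ℝ) ≤ (i:ℝ) ∧ (i:ℝ) ≤ ((⌊z - 1⌋:ℤ):ℝ)) ↔ ((i:ℝ)+1 ≤ z) := by
    rw [natcast_le_floor (z-1) i]
    constructor
    · rintro ⟨-, h⟩
      linarith
    · intro h
      exact ⟨by positivity, by linarith⟩
  simp only [hiff]
  split_ifs with h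
  · unfold Bf
    ring
  · ring

lemma matchCDFf2 (c : ℕ) (B K z : ℝ) :
    B * (K * binCDF c (1/2) 0 ((⌊z⌋:ℤ):ℝ))
      = ∑ a ∈ Finset.range (c+1), (if (a:ℝ) ≤ z then B * (K * Bf (1/2) c a) else 0) := by
  unfold binCDF
  rw [Finset.mul_sum, Finset.mul_sum]
  refine Finset.sum_congr rfl fun i hi => ?_
  have hiff : ((0:ℝ) ≤ (i:ℝ) ∧ (i:ℝ) ≤ ((⌊z⌋:ℤ):ℝ)) ↔ ((i:ℝ) ≤ z) := by
    rw [natcast_le_floor z i]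
    constructor
    · rintro ⟨-, h⟩
      exact h
    · intro h
      exact ⟨by positivity, h⟩
  simp only [hiff]
  split_ifs with h
  · unfold Bf
    ring
  · ring

-- ------------------- chunk 9: main theorem -------------------

theorem stmt7 (n : ℕ) (hn : 1 ≤ n) (p β q α r : ℝ) (hp : 1 < p) (hβ0 : 0 < β)
    (hβ : β ≤ (p - 1) / (p + 1)) (hq : 1 ≤ q) (hα : α = β / (p - 1)) (hr : r = p * α / q)
    (hr2 : r < 1 / 2) (ε : ℝ) :
    hsDiv (Pq n p β q) (Qq n p β q) (Real.exp ε) =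
      binExp (n - 1) (2 * r) (fun c =>
        (p - Real.exp ε) * α *
            binCDF c (1 / 2) (⌈lowf n p α r ε ((c : ℝ) + 1) - 1⌉ : ℝ) c
          + (1 - p * Real.exp ε) * α *
            binCDF c (1 / 2) (⌈lowf n p α r ε ((c : ℝ) + 1)⌉ : ℝ) c
          + (1 - Real.exp ε) * (1 - α - p * α) *
            binCDF c (1 / 2) (⌈lowf n p α r ε (c : ℝ)⌉ : ℝ) c) ∧
    hsDiv (Qq n p β q) (Pq n p β q) (Real.exp ε) =
      binExp (n - 1) (2 * r) (fun c =>
        (1 - p * Real.exp ε) * α *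
            binCDF c (1 / 2) 0 (⌊highf n p α r ε ((c : ℝ) + 1) - 1⌋ : ℝ)
          + (p - Real.exp ε) * α *
            binCDF c (1 / 2) 0 (⌊highf n p α r ε ((c : ℝ) + 1)⌋ : ℝ)
          + (1 - Real.exp ε) * (1 - α - p * α) *
            binCDF c (1 / 2) 0 (⌊highf n p α r ε (c : ℝ)⌋ : ℝ)) := by
  have hp1 : (0:ℝ) < p - 1 := by linarith
  have hα0 : 0 < α := by rw [hα]; exact div_pos hβ0 hp1
  have hβq : β * (p+1) ≤ p - 1 := (le_div_iff₀ (by linarith : (0:ℝ) < p+1)).1 hβ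
  have hpa1 : p*α + α ≤ 1 := by
    have hαp1 : α * (p+1) ≤ 1 := by
      rw [hα, div_mul_eq_mul_div, div_le_one hp1]
      linarith
    calc p*α + α = α*(p+1) := by ring
      _ ≤ 1 := hαp1
  have hq0 : (0:ℝ) < q := by linarith
  have hr0 : 0 < r := by rw [hr]; exact div_pos (mul_pos (by linarith) hα0) hq0
  have hr2' : 2*r < 1 := by linarith
  have h2r0 : (0:ℝ) ≤ 2*r := by linarith
  have h2r1 : 2*r ≤ 1 := by linarith
  have hw1 : (0:ℝ) ≤ p*α := mul_nonneg (by linarith) hα0.le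
  have hw2 : (0:ℝ) ≤ α := hα0.le
  have h12' : α + p*α ≤ 1 := by linarith
  have hPq : Pq n p β q = lawP (n-1) (2*r) (1/2) (p*α) α := by
    unfold Pq
    rw [← hα, ← hr]
  have hQq : Qq n p β q = lawP (n-1) (2*r) (1/2) α (p*α) := by
    unfold Qq
    rw [← hα, ← hr]
    exact lawQ_eq _ _ _ _ _ hw1 hw2 hpa1
  constructor
  · rw [hPq, hQq,
      hsDiv_eq_sum (n-1) (2*r) (p*α) α α (p*α) (Real.exp ε) h2r0 h2r1 hw1 hw2 hpa1 hw2 hw1 h12']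
    have e2 : ∑ s ∈ Finset.range (n-1+2), ∑ x ∈ Finset.range (s+1),
        max 0 (PmR (n-1) (2*r) (p*α) α x (s-x) - Real.exp ε * PmR (n-1) (2*r) α (p*α) x (s-x))
      = ∑ s ∈ Finset.range (n-1+2), ∑ x ∈ Finset.range (s+1),
        ((if lowf n p α r ε (s:ℝ) ≤ (x:ℝ) then
            (if 1 ≤ x then Bf (2*r) (n-1) (s-1) * ((p*α - Real.exp ε*α) * Bf (1/2) (s-1) (x-1)) else 0)
          else 0)
         + ((if lowf n p α r ε (s:ℝ) ≤ (x:ℝ) then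
            (if 1 ≤ s - x then Bf (2*r) (n-1) (s-1) * ((α - Real.exp ε*(p*α)) * Bf (1/2) (s-1) x) else 0)
          else 0)
         + (if lowf n p α r ε (s:ℝ) ≤ (x:ℝ) then
            Bf (2*r) (n-1) s * ((1-(p*α+α)) * (1-Real.exp ε) * Bf (1/2) s x)
          else 0))) := by
      refine Finset.sum_congr rfl fun s hs => Finset.sum_congr rfl fun x hx => ?_
      rw [Finset.mem_range] at hs hx
      rw [maxP n p α r ε hn hp hα0 hr0 hr2' hpa1 s x (by omega) (by omega),
        decompP (n-1) (2*r) (p*α) α (Real.exp ε) s x (by omega)]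
      split_ifs <;> ring
    rw [e2]
    simp only [Finset.sum_add_distrib]
    rw [sumA (n-1) (fun c a => Bf (2*r) (n-1) c * ((p*α - Real.exp ε*α) * Bf (1/2) c a))
        (fun s x => lowf n p α r ε (s:ℝ) ≤ (x:ℝ)),
      sumB (n-1) (fun c a => Bf (2*r) (n-1) c * ((α - Real.exp ε*(p*α)) * Bf (1/2) c a))
        (fun s x => lowf n p α r ε (s:ℝ) ≤ (x:ℝ)),
      sumC (n-1) (fun s x => Bf (2*r) (n-1) s * ((1-(p*α+α)) * (1-Real.exp ε) * Bf (1/2) s x))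
        (fun s x => lowf n p α r ε (s:ℝ) ≤ (x:ℝ)) (fun x => by rw [Bf_zero (by omega)]; ring)]
    unfold binExp
    rw [← Finset.sum_add_distrib, ← Finset.sum_add_distrib]
    refine Finset.sum_congr rfl fun c hc => ?_
    have hBfc : ∀ X : ℝ, ((n-1).choose c : ℝ) * (2*r)^c * (1-2*r)^(n-1-c) * X
        = Bf (2*r) (n-1) c * X := fun X => rfl
    rw [hBfc, mul_add, mul_add,
      matchCDFc1 c (Bf (2*r) (n-1) c) ((p - Real.exp ε)*α) (lowf n p α r ε ((c:ℝ)+1)),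
      matchCDFc2 c (Bf (2*r) (n-1) c) ((1 - p*Real.exp ε)*α) (lowf n p α r ε ((c:ℝ)+1)),
      matchCDFc2 c (Bf (2*r) (n-1) c) ((1 - Real.exp ε)*(1-α-p*α)) (lowf n p α r ε (c:ℝ)),
      ← add_assoc]
    congr 1
    · congr 1
      · refine Finset.sum_congr rfl fun a ha => ?_
        push_cast
        split_ifs with h
        · ring
        · rfl
      · refine Finset.sum_congr rfl fun a ha => ?_
        push_cast
        split_ifs with h
        · ring
        · rfl
    · refine Finset.sum_congr rfl fun a ha => ?_
      split_ifs with h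
      · ring
      · rfl
  · rw [hPq, hQq,
      hsDiv_eq_sum (n-1) (2*r) α (p*α) (p*α) α (Real.exp ε) h2r0 h2r1 hw2 hw1 h12' hw1 hw2 hpa1]
    have e2 : ∑ s ∈ Finset.range (n-1+2), ∑ x ∈ Finset.range (s+1),
        max 0 (PmR (n-1) (2*r) α (p*α) x (s-x) - Real.exp ε * PmR (n-1) (2*r) (p*α) α x (s-x))
      = ∑ s ∈ Finset.range (n-1+2), ∑ x ∈ Finset.range (s+1),
        ((if (x:ℝ) ≤ highf n p α r ε (s:ℝ) then
            (if 1 ≤ x then Bf (2*r) (n-1) (s-1) * ((α - Real.exp ε*(p*α)) * Bf (1/2) (s-1) (x-1)) else 0)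
          else 0)
         + ((if (x:ℝ) ≤ highf n p α r ε (s:ℝ) then
            (if 1 ≤ s - x then Bf (2*r) (n-1) (s-1) * ((p*α - Real.exp ε*α) * Bf (1/2) (s-1) x) else 0)
          else 0)
         + (if (x:ℝ) ≤ highf n p α r ε (s:ℝ) then
            Bf (2*r) (n-1) s * ((1-(α+p*α)) * (1-Real.exp ε) * Bf (1/2) s x)
          else 0))) := by
      refine Finset.sum_congr rfl fun s hs => Finset.sum_congr rfl fun x hx => ?_
      rw [Finset.mem_range] at hs hx
      rw [maxQ n p α r ε hn hp hα0 hr0 hr2' hpa1 s x (by omega) (by omega),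
        decompP (n-1) (2*r) α (p*α) (Real.exp ε) s x (by omega)]
      split_ifs <;> ring
    rw [e2]
    simp only [Finset.sum_add_distrib]
    rw [sumA (n-1) (fun c a => Bf (2*r) (n-1) c * ((α - Real.exp ε*(p*α)) * Bf (1/2) c a))
        (fun s x => (x:ℝ) ≤ highf n p α r ε (s:ℝ)),
      sumB (n-1) (fun c a => Bf (2*r) (n-1) c * ((p*α - Real.exp ε*α) * Bf (1/2) c a))
        (fun s x => (x:ℝ) ≤ highf n p α r ε (s:ℝ)),
      sumC (n-1) (fun s x => Bf (2*r) (n-1) s * ((1-(α+p*α)) * (1-Real.exp ε) * Bf (1/2) s x))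
        (fun s x => (x:ℝ) ≤ highf n p α r ε (s:ℝ)) (fun x => by rw [Bf_zero (by omega)]; ring)]
    unfold binExp
    rw [← Finset.sum_add_distrib, ← Finset.sum_add_distrib]
    refine Finset.sum_congr rfl fun c hc => ?_
    have hBfc : ∀ X : ℝ, ((n-1).choose c : ℝ) * (2*r)^c * (1-2*r)^(n-1-c) * X
        = Bf (2*r) (n-1) c * X := fun X => rfl
    rw [hBfc, mul_add, mul_add,
      matchCDFf1 c (Bf (2*r) (n-1) c) ((1 - p*Real.exp ε)*α) (highf n p α r ε ((c:ℝ)+1)),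
      matchCDFf2 c (Bf (2*r) (n-1) c) ((p - Real.exp ε)*α) (highf n p α r ε ((c:ℝ)+1)),
      matchCDFf2 c (Bf (2*r) (n-1) c) ((1 - Real.exp ε)*(1-α-p*α)) (highf n p α r ε (c:ℝ)),
      ← add_assoc]
    congr 1
    · congr 1
      · refine Finset.sum_congr rfl fun a ha => ?_
        push_cast
        split_ifs with h
        · ring
        · rfl
      · refine Finset.sum_congr rfl fun a ha => ?_
        push_cast
        split_ifs with h
        · ring
        · rfl
    · refine Finset.sum_congr rfl fun a ha => ?_
      split_ifs with h
      · ring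
      · rfl

end
end
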